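/- Define an equivalence on set partitions of [n]: π ∼ σ iff λ(π) = λ(σ) and the block of π containing n has the same size as the block of σ containing n. Define f ≡_n g for linear combinations of {e_π : π ⊢ [n]} iff for every equivalence class the sums of coefficients agree. Then: if π, σ ⊢ [n−1] with π ∼ σ, then π/n ∼ σ/n and π⊕_{n−1}n ∼ σ⊕_{n−1}n; consequently, if f ≡_{n−1} g then f↑_{n−1}^n ≡_n g↑_{n−1}^n, given that e_τ↑_{n−1}^n ≡_n (1/b)(e_{τ/n} − e_{τ⊕_{n−1}n}) for any τ ⊢ [n−1] with b the size of the block of τ containing n−1. -/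

import Mathlib

open scoped Classical

/-- The setoid on a sum type whose classes are the classes of `π` together with
the classes of `σ`. -/
def sumSetoid {α β : Type*} (π : Setoid α) (σ : Setoid β) : Setoid (α ⊕ β) where
  r x y := Sum.LiftRel π.r σ.r x y
  iseqv := by
    constructor
    · intro x; cases x
      · exact Sum.LiftRel.inl (π.iseqv.refl _)
      · exact Sum.LiftRel.inr (σ.iseqv.refl _)
    · intro x y h; cases h
      · exact Sum.LiftRel.inl (π.iseqv.symm ‹_›)
      · exact Sum.LiftRel.inr (σ.iseqv.symm ‹_›)
    · intro x y z h1 h2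
      cases h1 <;> cases h2
      · exact Sum.LiftRel.inl (π.iseqv.trans ‹_› ‹_›)
      · exact Sum.LiftRel.inr (σ.iseqv.trans ‹_› ‹_›)

/-- `π|σ` for set partitions (setoids). -/
def concatSP {n m : ℕ} (π : Setoid (Fin n)) (σ : Setoid (Fin m)) : Setoid (Fin (n + m)) :=
  Setoid.comap (fun a => finSumFinEquiv.symm a) (sumSetoid π σ)

/-- `π/n`: add a new largest element as a singleton block. -/
def addSingleton {n : ℕ} (π : Setoid (Fin n)) : Setoid (Fin (n + 1)) :=
  concatSP π (⊥ : Setoid (Fin 1))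

/-- `π ⊕_j n`: insert the new largest element into the block containing `j`. -/
def oplus {m : ℕ} (π : Setoid (Fin m)) (j : Fin m) : Setoid (Fin (m + 1)) :=
  Setoid.comap (fun x : Fin (m + 1) => if h : (x : ℕ) < m then ⟨x, h⟩ else j) π

/-- `λ(π)`: the multiset of block sizes of a set partition (setoid) of `[n]`. -/
noncomputable def blockSizes {n : ℕ} (π : Setoid (Fin n)) : Multiset ℕ :=
  ((Finset.univ.image fun x : Fin n => Finset.univ.filter fun y => π.r x y).val).map
    Finset.card

/-- The size of the block containing the largest element. -/
noncomputable def lastBlockSize {k : ℕ} (π : Setoid (Fin (k + 1))) : ℕ :=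
  (Finset.univ.filter fun x => π.r x (Fin.last k)).card

/-- The equivalence `π ∼ σ`: same multiset of block sizes and the blocks containing the
largest element have the same size. -/
noncomputable def sim {k : ℕ} (π σ : Setoid (Fin (k + 1))) : Prop :=
  blockSizes π = blockSizes σ ∧ lastBlockSize π = lastBlockSize σ

/-- `f ≡_n g` for coefficient vectors (in the `e`-basis of NCSym): for every
`∼`-equivalence class the sums of coefficients agree. -/
noncomputable def equivN {k : ℕ} (c c' : Setoid (Fin (k + 1)) → ℚ) : Prop :=
  ∀ τ, (∑ᶠ σ ∈ {σ | sim σ τ}, c σ) = ∑ᶠ σ ∈ {σ | sim σ τ}, c' σ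

/-- The coefficient vector of `f↑_{n-1}^n`, computed via the inducing formula
`e_τ↑_{n-1}^n ≡_n (1/b)(e_{τ/n} − e_{τ⊕_{n-1}n})`, where `b` is the size of the block
of `τ` containing `n−1`. -/
noncomputable def inducedCoeff {m : ℕ} (c : Setoid (Fin (m + 1)) → ℚ) :
    Setoid (Fin (m + 2)) → ℚ := fun ρ =>
  (∑ᶠ τ ∈ {τ : Setoid (Fin (m + 1)) | addSingleton τ = ρ}, c τ / (lastBlockSize τ : ℚ)) -
  (∑ᶠ τ ∈ {τ : Setoid (Fin (m + 1)) | oplus τ (Fin.last m) = ρ}, c τ / (lastBlockSize τ : ℚ))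
open Finset

namespace SimProof

noncomputable instance setoidFinite {α : Type*} [Finite α] : Finite (Setoid α) :=
  Finite.of_injective (fun s => s.r) (fun a b h => Setoid.ext fun x y => iff_of_eq (congrFun (congrFun h x) y))

variable {n k : ℕ}

/-- The block of `x`. -/
noncomputable def blk (π : Setoid (Fin n)) (x : Fin n) : Finset (Fin n) :=
  Finset.univ.filter fun y => π.r x y

lemma blockSizes_def (π : Setoid (Fin n)) :
    blockSizes π = ((Finset.univ.image (blk π)).val).map Finset.card := rfl

lemma mem_blk {π : Setoid (Fin n)} {x y : Fin n} : y ∈ blk π x ↔ π.r x y := by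
  simp [blk]

lemma blk_self (π : Setoid (Fin n)) (x : Fin n) : x ∈ blk π x :=
  mem_blk.mpr (π.iseqv.refl x)

lemma blk_eq_iff {π : Setoid (Fin n)} {x y : Fin n} : blk π x = blk π y ↔ π.r x y := by
  constructor
  · intro h
    have := blk_self π y
    rw [← h] at this
    exact mem_blk.mp this
  · intro h
    ext z
    simp only [mem_blk]
    exact ⟨fun hz => π.iseqv.trans (π.iseqv.symm h) hz, fun hz => π.iseqv.trans h hz⟩

lemma lastBlockSize_eq (π : Setoid (Fin (k + 1))) :
    lastBlockSize π = (blk π (Fin.last k)).card := by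
  unfold lastBlockSize blk
  congr 1
  ext x
  simp only [Finset.mem_filter, Finset.mem_univ, true_and]
  exact ⟨fun h => π.iseqv.symm h, fun h => π.iseqv.symm h⟩

lemma addSingleton_r_castSucc (π : Setoid (Fin n)) (a b : Fin n) :
    (addSingleton π).r a.castSucc b.castSucc ↔ π.r a b := by
  show (sumSetoid π ⊥).r (finSumFinEquiv.symm (Fin.castAdd 1 a)) (finSumFinEquiv.symm (Fin.castAdd 1 b)) ↔ _
  rw [finSumFinEquiv_symm_apply_castAdd, finSumFinEquiv_symm_apply_castAdd]
  constructor
  · intro h; cases h; assumption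
  · exact Sum.LiftRel.inl

lemma addSingleton_r_last (π : Setoid (Fin n)) (x : Fin (n + 1)) :
    (addSingleton π).r x (Fin.last n) ↔ x = Fin.last n := by
  constructor
  · intro h
    have h2 : (sumSetoid π ⊥).r (finSumFinEquiv.symm x) (Sum.inr 0) := by
      rw [← finSumFinEquiv_symm_last]; exact h
    cases hx : finSumFinEquiv.symm x with
    | inl a => rw [hx] at h2; cases h2
    | inr b =>
      rw [hx] at h2
      cases h2 with
      | inr hb =>
        have hb' : b = 0 := hb
        rw [hb'] at hx
        have := congrArg finSumFinEquiv hx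
        simp at this
        exact this.trans (Fin.ext (by simp))
  · rintro rfl
    exact (addSingleton π).iseqv.refl _

end SimProof
open Finset

namespace SimProof

variable {n k : ℕ}

lemma image_val_of_injective {α β : Type*} [DecidableEq β] (s : Finset α) (f : α → β)
    (hf : Function.Injective f) : (s.image f).val = s.val.map f := by
  rw [Finset.image_val, Multiset.dedup_eq_self.mpr (s.nodup.map hf)]

lemma blk_addSingleton_castSucc (π : Setoid (Fin n)) (x : Fin n) :
    blk (addSingleton π) x.castSucc = (blk π x).image Fin.castSucc := by
  ext y
  induction y using Fin.lastCases with
  | last =>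
    simp only [mem_blk, Finset.mem_image]
    constructor
    · intro h
      exact absurd ((addSingleton_r_last π _).mp h)
        (Fin.ne_last_of_lt (Fin.castSucc_lt_last x))
    · rintro ⟨b, _, hb⟩
      exact absurd hb (Fin.ne_last_of_lt (Fin.castSucc_lt_last b))
  | cast y =>
    simp only [mem_blk, addSingleton_r_castSucc]
    constructor
    · intro h
      exact Finset.mem_image_of_mem _ (mem_blk.mpr h)
    · intro h
      obtain ⟨b, hb, hby⟩ := Finset.mem_image.mp h
      have : b = y := Fin.castSucc_injective _ hby
      exact this ▸ mem_blk.mp hb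

end SimProof
open Finset

namespace SimProof

variable {n k : ℕ}

lemma blk_addSingleton_last (π : Setoid (Fin n)) :
    blk (addSingleton π) (Fin.last n) = {Fin.last n} := by
  ext y
  simp only [mem_blk, Finset.mem_singleton]
  constructor
  · intro h
    exact (addSingleton_r_last π y).mp ((addSingleton π).iseqv.symm h)
  · rintro rfl
    exact (addSingleton π).iseqv.refl _

lemma blockSizes_addSingleton (π : Setoid (Fin n)) :
    blockSizes (addSingleton π) = 1 ::ₘ blockSizes π := by
  rw [blockSizes_def, blockSizes_def]
  have h1 : (Finset.univ : Finset (Fin (n + 1))).image (blk (addSingleton π)) =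
      insert {Fin.last n}
        ((Finset.univ.image (blk π)).image (fun S => S.image Fin.castSucc)) := by
    rw [Fin.univ_castSuccEmb, Finset.cons_eq_insert, Finset.image_insert, blk_addSingleton_last, Finset.map_eq_image, Finset.image_image]
    congr 1
    rw [Finset.image_image]
    apply Finset.image_congr
    intro x _
    exact blk_addSingleton_castSucc π x
  rw [h1]
  have hnot : ({Fin.last n} : Finset (Fin (n+1))) ∉
      (Finset.univ.image (blk π)).image (fun S => S.image Fin.castSucc) := by
    intro hmem
    obtain ⟨S, hS, hSe⟩ := Finset.mem_image.mp hmem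
    obtain ⟨x, _, rfl⟩ := Finset.mem_image.mp hS
    have : x.castSucc ∈ ({Fin.last n} : Finset (Fin (n+1))) := by
      rw [← hSe]; exact Finset.mem_image_of_mem _ (blk_self π x)
    exact Fin.ne_last_of_lt (Fin.castSucc_lt_last x) (Finset.mem_singleton.mp this)
  rw [Finset.insert_val_of_notMem hnot, Multiset.map_cons]
  congr 1
  rw [image_val_of_injective _ _ (Finset.image_injective (Fin.castSucc_injective n)),
    Multiset.map_map]
  apply Multiset.map_congr rfl
  intro S _
  exact Finset.card_image_of_injective S (Fin.castSucc_injective n)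

lemma lastBlockSize_addSingleton (π : Setoid (Fin (k + 1))) :
    lastBlockSize (addSingleton π) = 1 := by
  rw [lastBlockSize_eq, blk_addSingleton_last, Finset.card_singleton]

end SimProof
open Finset

namespace SimProof

variable {k : ℕ}

/-- The projection used by `oplus`. -/
def oproj (j : Fin (k + 1)) (x : Fin (k + 2)) : Fin (k + 1) :=
  if h : (x : ℕ) < k + 1 then ⟨x, h⟩ else j

lemma oplus_r (π : Setoid (Fin (k + 1))) (j : Fin (k + 1)) (x y : Fin (k + 2)) :
    (oplus π j).r x y ↔ π.r (oproj j x) (oproj j y) := Iff.rfl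

lemma oproj_castSucc (j : Fin (k + 1)) (a : Fin (k + 1)) : oproj j a.castSucc = a := by
  unfold oproj
  rw [dif_pos (by simpa using a.isLt)]
  exact Fin.ext (by simp)

lemma oproj_last (j : Fin (k + 1)) : oproj j (Fin.last (k + 1)) = j := by
  unfold oproj
  rw [dif_neg (by simp)]

/-- Adjoining the new largest element to a block that contains `Fin.last k`. -/
noncomputable def addF (S : Finset (Fin (k + 1))) : Finset (Fin (k + 2)) :=
  S.image Fin.castSucc ∪ (if Fin.last k ∈ S then {Fin.last (k + 1)} else ∅)

lemma mem_addF_castSucc {S : Finset (Fin (k + 1))} {a : Fin (k + 1)} :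
    a.castSucc ∈ addF S ↔ a ∈ S := by
  unfold addF
  rw [Finset.mem_union]
  constructor
  · rintro (h | h)
    · obtain ⟨b, hb, hba⟩ := Finset.mem_image.mp h
      exact (Fin.castSucc_injective _ hba) ▸ hb
    · exfalso
      by_cases hc : Fin.last k ∈ S
      · rw [if_pos hc, Finset.mem_singleton] at h
        exact Fin.ne_last_of_lt (Fin.castSucc_lt_last a) h
      · rw [if_neg hc] at h; exact absurd h (Finset.notMem_empty _)
  · intro h; exact Or.inl (Finset.mem_image_of_mem _ h)

lemma mem_addF_last {S : Finset (Fin (k + 1))} :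
    Fin.last (k + 1) ∈ addF S ↔ Fin.last k ∈ S := by
  unfold addF
  rw [Finset.mem_union]
  constructor
  · rintro (h | h)
    · obtain ⟨b, _, hba⟩ := Finset.mem_image.mp h
      exact absurd hba (Fin.ne_last_of_lt (Fin.castSucc_lt_last b))
    · by_cases hc : Fin.last k ∈ S
      · exact hc
      · rw [if_neg hc] at h; exact absurd h (Finset.notMem_empty _)
  · intro h
    rw [if_pos h]
    exact Or.inr (Finset.mem_singleton_self _)

lemma addF_injective : Function.Injective (addF (k := k)) := by
  intro S T h
  ext a
  rw [← mem_addF_castSucc (S := S), ← mem_addF_castSucc (S := T), h]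

lemma card_addF (S : Finset (Fin (k + 1))) :
    (addF S).card = S.card + (if Fin.last k ∈ S then 1 else 0) := by
  unfold addF
  rw [Finset.card_union_of_disjoint, Finset.card_image_of_injective _ (Fin.castSucc_injective _)]
  · congr 1
    split <;> simp
  · rw [Finset.disjoint_left]
    intro x hx hx2
    obtain ⟨b, _, rfl⟩ := Finset.mem_image.mp hx
    by_cases hc : Fin.last k ∈ S
    · rw [if_pos hc, Finset.mem_singleton] at hx2
      exact Fin.ne_last_of_lt (Fin.castSucc_lt_last b) hx2
    · rw [if_neg hc] at hx2; exact absurd hx2 (Finset.notMem_empty _)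

lemma blk_oplus_castSucc (π : Setoid (Fin (k + 1))) (x : Fin (k + 1)) :
    blk (oplus π (Fin.last k)) x.castSucc = addF (blk π x) := by
  ext y
  induction y using Fin.lastCases with
  | last =>
    rw [mem_blk, mem_addF_last, mem_blk, oplus_r, oproj_castSucc, oproj_last]
  | cast y =>
    rw [mem_blk, mem_addF_castSucc, mem_blk, oplus_r, oproj_castSucc, oproj_castSucc]

lemma blk_oplus_last (π : Setoid (Fin (k + 1))) :
    blk (oplus π (Fin.last k)) (Fin.last (k + 1)) = addF (blk π (Fin.last k)) := by
  rw [← blk_oplus_castSucc]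
  ext y
  rw [mem_blk, mem_blk, oplus_r, oplus_r, oproj_last, oproj_castSucc]

end SimProof
open Finset

namespace SimProof

variable {k : ℕ}

lemma lastBlockSize_oplus (π : Setoid (Fin (k + 1))) :
    lastBlockSize (oplus π (Fin.last k)) = lastBlockSize π + 1 := by
  rw [lastBlockSize_eq, lastBlockSize_eq, blk_oplus_last, card_addF,
    if_pos (blk_self π (Fin.last k))]

lemma blockSizes_oplus (π : Setoid (Fin (k + 1))) :
    blockSizes (oplus π (Fin.last k)) =
      (lastBlockSize π + 1) ::ₘ (blockSizes π).erase (lastBlockSize π) := by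
  rw [blockSizes_def, blockSizes_def]
  have h1 : (Finset.univ : Finset (Fin (k + 2))).image (blk (oplus π (Fin.last k))) =
      (Finset.univ.image (blk π)).image addF := by
    rw [Fin.univ_castSuccEmb, Finset.cons_eq_insert, Finset.image_insert, blk_oplus_last,
      Finset.map_eq_image, Finset.image_image, Finset.image_image]
    have h2 : (Finset.univ.image ((blk (oplus π (Fin.last k))) ∘ Fin.castSuccEmb)) =
        Finset.univ.image (addF ∘ blk π) :=
      Finset.image_congr fun x _ => blk_oplus_castSucc π x
    rw [h2]
    exact Finset.insert_eq_self.mpr (Finset.mem_image_of_mem _ (Finset.mem_univ (Fin.last k)))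
  rw [h1, image_val_of_injective _ _ addF_injective, Multiset.map_map]
  -- now: map (card ∘ addF) B.val = (b+1) ::ₘ (map card B.val).erase b
  set B := (Finset.univ.image (blk π)) with hB
  have hS0 : blk π (Fin.last k) ∈ B.val := Finset.mem_val.mpr (Finset.mem_image_of_mem (blk π) (Finset.mem_univ _))
  have hcons := Multiset.cons_erase hS0
  have hb : lastBlockSize π = (blk π (Fin.last k)).card := lastBlockSize_eq π
  -- blocks other than S₀ don't contain last
  have hrest : ∀ S ∈ (B.val.erase (blk π (Fin.last k))), Fin.last k ∉ S := by
    intro S hS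
    have hne : S ≠ blk π (Fin.last k) :=
      (Multiset.Nodup.mem_erase_iff B.nodup).mp hS |>.1
    have hSB : S ∈ B.val := Multiset.mem_of_mem_erase hS
    obtain ⟨x, _, rfl⟩ := Finset.mem_image.mp (Finset.mem_val.mp hSB)
    intro hlast
    exact hne (blk_eq_iff.mpr (mem_blk.mp hlast))
  calc Multiset.map (Finset.card ∘ addF) B.val
      = Multiset.map (Finset.card ∘ addF)
          ((blk π (Fin.last k)) ::ₘ B.val.erase (blk π (Fin.last k))) := by rw [hcons]
    _ = (lastBlockSize π + 1) ::ₘ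
          Multiset.map (Finset.card ∘ addF) (B.val.erase (blk π (Fin.last k))) := by
        rw [Multiset.map_cons]
        congr 1
        show (addF (blk π (Fin.last k))).card = _
        rw [card_addF, if_pos (blk_self π (Fin.last k)), hb]
    _ = (lastBlockSize π + 1) ::ₘ
          Multiset.map Finset.card (B.val.erase (blk π (Fin.last k))) := by
        congr 1
        apply Multiset.map_congr rfl
        intro S hS
        show (addF S).card = S.card
        rw [card_addF, if_neg (hrest S hS), add_zero]
    _ = (lastBlockSize π + 1) ::ₘ (Multiset.map Finset.card B.val).erase (lastBlockSize π) := by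
        congr 1
        have : Multiset.map Finset.card B.val =
            (blk π (Fin.last k)).card ::ₘ
              Multiset.map Finset.card (B.val.erase (blk π (Fin.last k))) := by
          conv_lhs => rw [← hcons]
          rw [Multiset.map_cons]
        rw [this, hb, Multiset.erase_cons_head]

end SimProof
open Finset

namespace SimProof

variable {k : ℕ}

lemma sim_refl (π : Setoid (Fin (k + 1))) : sim π π := ⟨rfl, rfl⟩
lemma sim_symm {π σ : Setoid (Fin (k + 1))} (h : sim π σ) : sim σ π := ⟨h.1.symm, h.2.symm⟩
lemma sim_trans {π σ τ : Setoid (Fin (k + 1))} (h1 : sim π σ) (h2 : sim σ τ) : sim π τ :=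
  ⟨h1.1.trans h2.1, h1.2.trans h2.2⟩

/-- `sim` as a setoid. -/
noncomputable def simSetoid (k : ℕ) : Setoid (Setoid (Fin (k + 1))) :=
  ⟨sim, ⟨sim_refl, sim_symm, fun h1 h2 => sim_trans h1 h2⟩⟩

lemma finsum_mem_eq_filter {α : Type*} [Fintype α] (s : Set α) (f : α → ℚ) :
    ∑ᶠ a ∈ s, f a = ∑ a ∈ Finset.univ.filter (· ∈ s), f a := by
  rw [← finsum_mem_coe_finset]
  congr 1
  ext a
  simp

lemma fiber_collapse {α β : Type*} [Fintype α] [Fintype β] (g : α → β) (S : Set β)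
    (f : α → ℚ) :
    (∑ᶠ ρ ∈ S, ∑ᶠ τ ∈ {τ | g τ = ρ}, f τ) = ∑ᶠ τ ∈ {τ | g τ ∈ S}, f τ := by
  rw [finsum_mem_eq_filter, finsum_mem_eq_filter]
  have h1 : ∀ ρ : β, (∑ᶠ τ ∈ {τ | g τ = ρ}, f τ) =
      ∑ τ ∈ Finset.univ.filter (fun τ => g τ = ρ), f τ := by
    intro ρ
    rw [finsum_mem_eq_filter]
    apply Finset.sum_congr _ (fun _ _ => rfl)
    apply Finset.filter_congr
    intro τ _
    simp [Set.mem_setOf_eq]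
  simp only [h1]
  refine (Finset.sum_fiberwise_eq_sum_filter Finset.univ
    (Finset.univ.filter (· ∈ S)) g f).trans ?_
  apply Finset.sum_congr _ (fun _ _ => rfl)
  apply Finset.filter_congr
  intro τ _
  simp

end SimProof
open Finset

namespace SimProof

variable {k : ℕ}

lemma class_sum_eq (c c' : Setoid (Fin (k + 1)) → ℚ) (h : equivN c c')
    [Fintype (Setoid (Fin (k + 1)))] (τ₀ : Setoid (Fin (k + 1))) :
    ∑ τ ∈ Finset.univ.filter (fun τ => sim τ τ₀), c τ =
      ∑ τ ∈ Finset.univ.filter (fun τ => sim τ τ₀), c' τ := by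
  have := h τ₀
  rw [finsum_mem_eq_filter, finsum_mem_eq_filter] at this
  calc ∑ τ ∈ Finset.univ.filter (fun τ => sim τ τ₀), c τ
      = ∑ τ ∈ Finset.univ.filter (· ∈ {σ | sim σ τ₀}), c τ := by
        apply Finset.sum_congr _ (fun _ _ => rfl)
        apply Finset.filter_congr; intro τ _; simp [Set.mem_setOf_eq]
    _ = ∑ τ ∈ Finset.univ.filter (· ∈ {σ | sim σ τ₀}), c' τ := this
    _ = ∑ τ ∈ Finset.univ.filter (fun τ => sim τ τ₀), c' τ := by
        apply Finset.sum_congr _ (fun _ _ => rfl)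
        apply Finset.filter_congr; intro τ _; simp [Set.mem_setOf_eq]

lemma saturated_sum (c c' : Setoid (Fin (k + 1)) → ℚ) (h : equivN c c')
    (T : Set (Setoid (Fin (k + 1)))) (hT : ∀ a b, sim a b → a ∈ T → b ∈ T)
    (w : Setoid (Fin (k + 1)) → ℚ) (hw : ∀ a b, sim a b → w a = w b) :
    (∑ᶠ τ ∈ T, c τ * w τ) = ∑ᶠ τ ∈ T, c' τ * w τ := by
  letI sq : Setoid (Setoid (Fin (k + 1))) := simSetoid k
  haveI : Fintype (Setoid (Fin (k + 1))) := Fintype.ofFinite _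
  haveI : Fintype (Quotient sq) := Fintype.ofFinite _
  rw [finsum_mem_eq_filter, finsum_mem_eq_filter]
  rw [← Finset.sum_fiberwise_of_maps_to (g := Quotient.mk sq) (t := Finset.univ)
    (fun _ _ => Finset.mem_univ _) (fun τ => c τ * w τ),
    ← Finset.sum_fiberwise_of_maps_to (g := Quotient.mk sq) (t := Finset.univ)
    (fun _ _ => Finset.mem_univ _) (fun τ => c' τ * w τ)]
  apply Finset.sum_congr rfl
  intro q _
  induction q using Quotient.inductionOn with
  | h τ₀ =>
  have key : ∀ τ, (Quotient.mk sq τ = Quotient.mk sq τ₀) ↔ sim τ τ₀ :=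
    fun τ => ⟨fun hq => Quotient.exact hq, fun hs => Quotient.sound hs⟩
  by_cases hτ₀ : τ₀ ∈ T
  · have hfe : (Finset.univ.filter (· ∈ T)).filter (fun τ => Quotient.mk sq τ = Quotient.mk sq τ₀)
        = Finset.univ.filter (fun τ => sim τ τ₀) := by
      ext τ
      simp only [Finset.mem_filter, Finset.mem_univ, true_and, key]
      exact ⟨fun hh => hh.2, fun hh => ⟨hT τ₀ τ (sim_symm hh) hτ₀, hh⟩⟩
    rw [hfe]
    have hc : ∀ (d : Setoid (Fin (k + 1)) → ℚ),
        ∑ τ ∈ Finset.univ.filter (fun τ => sim τ τ₀), d τ * w τ =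
          (∑ τ ∈ Finset.univ.filter (fun τ => sim τ τ₀), d τ) * w τ₀ := by
      intro d
      rw [Finset.sum_mul]
      apply Finset.sum_congr rfl
      intro τ hτ
      rw [hw τ τ₀ (Finset.mem_filter.mp hτ).2]
    rw [hc, hc, class_sum_eq c c' h τ₀]
  · have hfe : (Finset.univ.filter (· ∈ T)).filter (fun τ => Quotient.mk sq τ = Quotient.mk sq τ₀)
        = ∅ := by
      ext τ
      simp only [Finset.mem_filter, Finset.mem_univ, true_and, key, Finset.notMem_empty,
        iff_false, not_and]
      intro hτT hs
      exact hτ₀ (hT τ τ₀ hs hτT)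
    rw [hfe]
    simp

end SimProof
open Finset

namespace SimProof

lemma part1 (m : ℕ) (π σ : Setoid (Fin (m + 1))) (h : sim π σ) :
    sim (addSingleton π) (addSingleton σ) :=
  ⟨by rw [blockSizes_addSingleton, blockSizes_addSingleton, h.1],
   by rw [lastBlockSize_addSingleton, lastBlockSize_addSingleton]⟩

lemma part2 (m : ℕ) (π σ : Setoid (Fin (m + 1))) (h : sim π σ) :
    sim (oplus π (Fin.last m)) (oplus σ (Fin.last m)) :=
  ⟨by rw [blockSizes_oplus, blockSizes_oplus, h.1, h.2],
   by rw [lastBlockSize_oplus, lastBlockSize_oplus, h.2]⟩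

lemma part3 (m : ℕ) (c c' : Setoid (Fin (m + 1)) → ℚ) (h : equivN c c') :
    equivN (inducedCoeff c) (inducedCoeff c') := by
  haveI : Fintype (Setoid (Fin (m + 1))) := Fintype.ofFinite _
  haveI : Fintype (Setoid (Fin (m + 2))) := Fintype.ofFinite _
  intro τ
  set S : Set (Setoid (Fin (m + 2))) := {σ | sim σ τ} with hS
  have split : ∀ d : Setoid (Fin (m + 1)) → ℚ,
      (∑ᶠ ρ ∈ S, inducedCoeff d ρ) =
        (∑ᶠ ρ ∈ S, ∑ᶠ τ' ∈ {τ' : Setoid (Fin (m + 1)) | addSingleton τ' = ρ},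
            d τ' / (lastBlockSize τ' : ℚ)) -
        (∑ᶠ ρ ∈ S, ∑ᶠ τ' ∈ {τ' : Setoid (Fin (m + 1)) | oplus τ' (Fin.last m) = ρ},
            d τ' / (lastBlockSize τ' : ℚ)) := by
    intro d
    rw [finsum_mem_eq_filter, finsum_mem_eq_filter, finsum_mem_eq_filter]
    rw [← Finset.sum_sub_distrib]
    rfl
  rw [split c, split c']
  rw [fiber_collapse (addSingleton) S, fiber_collapse (addSingleton) S,
    fiber_collapse (fun τ' => oplus τ' (Fin.last m)) S,
    fiber_collapse (fun τ' => oplus τ' (Fin.last m)) S]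
  have hw : ∀ a b : Setoid (Fin (m + 1)), sim a b →
      ((lastBlockSize a : ℚ))⁻¹ = ((lastBlockSize b : ℚ))⁻¹ := by
    intro a b hab
    rw [hab.2]
  have e1 : (∑ᶠ τ' ∈ {τ' : Setoid (Fin (m + 1)) | addSingleton τ' ∈ S},
      c τ' / (lastBlockSize τ' : ℚ)) =
      ∑ᶠ τ' ∈ {τ' : Setoid (Fin (m + 1)) | addSingleton τ' ∈ S},
      c' τ' / (lastBlockSize τ' : ℚ) := by
    simp only [div_eq_mul_inv]
    apply saturated_sum c c' h
    · intro a b hab haS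
      exact sim_trans (sim_symm (part1 m a b hab)) haS
    · exact hw
  have e2 : (∑ᶠ τ' ∈ {τ' : Setoid (Fin (m + 1)) | oplus τ' (Fin.last m) ∈ S},
      c τ' / (lastBlockSize τ' : ℚ)) =
      ∑ᶠ τ' ∈ {τ' : Setoid (Fin (m + 1)) | oplus τ' (Fin.last m) ∈ S},
      c' τ' / (lastBlockSize τ' : ℚ) := by
    simp only [div_eq_mul_inv]
    apply saturated_sum c c' h
    · intro a b hab haS
      exact sim_trans (sim_symm (part2 m a b hab)) haS
    · exact hw
  rw [e1, e2]

end SimProof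

theorem sim_compatible_and_induce (m : ℕ) :
    (∀ π σ : Setoid (Fin (m + 1)), sim π σ → sim (addSingleton π) (addSingleton σ)) ∧
    (∀ π σ : Setoid (Fin (m + 1)), sim π σ →
      sim (oplus π (Fin.last m)) (oplus σ (Fin.last m))) ∧
    (∀ c c' : Setoid (Fin (m + 1)) → ℚ, equivN c c' →
      equivN (inducedCoeff c) (inducedCoeff c')) :=
  ⟨SimProof.part1 m, SimProof.part2 m, SimProof.part3 m⟩
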